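/- Let I ⊆ ℝ be an open interval, v : I → ℝ twice differentiable with v > 0 on I, k a positive integer, and r_1,…,r_k, a_1,…,a_k real numbers. Set ζ := Σ_{i=1}^k r_i·a_i and η := Σ_{i=1}^k r_i·a_i², and assume ζ ≠ 0 and η ≠ 0. With α := ζ/η and β := ζ²/η, for every x ∈ I, Σ_{i=1}^k r_i·(v^{a_i})''(x)/v^{a_i}(x) = β·(v^{1/α})''(x)/v^{1/α}(x). -/

import Mathlib

open Filter in
lemma aux_ratio (I : Set ℝ) (hIopen : IsOpen I) (v : ℝ → ℝ)
    (hv : ∀ x ∈ I, DifferentiableAt ℝ v x)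
    (hv' : ∀ x ∈ I, DifferentiableAt ℝ (deriv v) x)
    (hvpos : ∀ x ∈ I, 0 < v x) (c : ℝ) (x : ℝ) (hx : x ∈ I) :
    deriv (deriv (fun y => v y ^ c)) x / v x ^ c =
      c * (deriv (deriv v) x / v x) + c * (c - 1) * (deriv v x / v x) ^ 2 := by
  have hv0 : v x ≠ 0 := (hvpos x hx).ne'
  have heq : deriv (fun y => v y ^ c) =ᶠ[nhds x]
      fun y => c * v y ^ (c - 1) * deriv v y := by
    filter_upwards [hIopen.mem_nhds hx] with y hy
    have := ((hv y hy).hasDerivAt.rpow_const (p := c) (Or.inl (hvpos y hy).ne')).deriv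
    rw [this]; ring
  rw [heq.deriv_eq]
  have h1 : HasDerivAt (fun y => c * v y ^ (c - 1))
      (c * (deriv v x * (c - 1) * v x ^ (c - 1 - 1))) x :=
    ((hv x hx).hasDerivAt.rpow_const (p := c - 1) (Or.inl hv0)).const_mul c
  have h2 : HasDerivAt (deriv v) (deriv (deriv v) x) x := (hv' x hx).hasDerivAt
  have h3 := (h1.mul h2).deriv
  rw [show (fun y => c * v y ^ (c - 1) * deriv v y)
      = (fun y => c * v y ^ (c - 1)) * deriv v from rfl, h3]
  have e1 : v x ^ (c - 1) = v x ^ c / v x := by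
    rw [Real.rpow_sub (hvpos x hx), Real.rpow_one]
  have e2 : v x ^ (c - 1 - 1) = v x ^ c / (v x * v x) := by
    rw [Real.rpow_sub (hvpos x hx), Real.rpow_sub (hvpos x hx), Real.rpow_one]
    ring
  rw [e1, e2]
  have hc0 : v x ^ c ≠ 0 := (Real.rpow_pos_of_pos (hvpos x hx) c).ne'
  field_simp
  ring

/-- Lemma 2.8 (ii) of the paper, one-dimensional case: with `ζ = Σ rᵢ aᵢ ≠ 0`,
`η = Σ rᵢ aᵢ² ≠ 0`, `α = ζ/η` and `β = ζ²/η`, for `v > 0` twice differentiable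
on the open interval `I`, `Σ rᵢ (v^{aᵢ})''/v^{aᵢ} = β (v^{1/α})''/v^{1/α}` on `I`. -/
theorem stmt_2 (I : Set ℝ) (hIopen : IsOpen I) (hIconn : I.OrdConnected)
    (v : ℝ → ℝ)
    (hv : ∀ x ∈ I, DifferentiableAt ℝ v x)
    (hv' : ∀ x ∈ I, DifferentiableAt ℝ (deriv v) x)
    (hvpos : ∀ x ∈ I, 0 < v x)
    (k : ℕ) (hk : 0 < k) (r a : Fin k → ℝ)
    (ζ η : ℝ) (hζdef : ζ = ∑ i, r i * a i) (hηdef : η = ∑ i, r i * a i ^ 2)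
    (hζ : ζ ≠ 0) (hη : η ≠ 0)
    (α β : ℝ) (hα : α = ζ / η) (hβ : β = ζ ^ 2 / η) :
    ∀ x ∈ I,
      ∑ i, r i * (deriv (deriv (fun y => v y ^ a i)) x / v x ^ a i) =
        β * (deriv (deriv (fun y => v y ^ (1 / α))) x / v x ^ (1 / α)) := by
  intro x hx
  set X := deriv (deriv v) x / v x with hX
  set Y := (deriv v x / v x) ^ 2 with hY
  have key : ∀ c : ℝ, deriv (deriv (fun y => v y ^ c)) x / v x ^ c
      = c * X + c * (c - 1) * Y := fun c =>
    aux_ratio I hIopen v hv hv' hvpos c x hx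
  simp only [key]
  have hL : ∑ i, r i * (a i * X + a i * (a i - 1) * Y) = ζ * X + (η - ζ) * Y := by
    have : ∀ i, r i * (a i * X + a i * (a i - 1) * Y)
        = (r i * a i) * X + ((r i * a i ^ 2) * Y - (r i * a i) * Y) := by
      intro i; ring
    rw [Finset.sum_congr rfl (fun i _ => this i)]
    rw [Finset.sum_add_distrib, Finset.sum_sub_distrib, ← Finset.sum_mul,
      ← Finset.sum_mul, ← Finset.sum_mul, ← hζdef, ← hηdef]
    ring
  rw [hL]
  subst hα hβ
  have h1α : 1 / (ζ / η) = η / ζ := by field_simp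
  rw [h1α]
  field_simp
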